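/- Let G be a finite graph and q ≥ 1. For the Potts partition function with constant coupling J and constant field H on spin 1 (Hamiltonian h(σ) = −J Σ_{{i,j}∈E} δ(σ_i,σ_j) − H Σ_i δ(1,σ_i)), Z(G) = Σ_{π∈P(G)} (∏_{i=1}^{k(π)} (e^{βH|π_i|} + q − 1)) · ∏_{K∈C(π)} [q^1] Z_zero(K; q, e^{βJ}−1), where P(G) is the set of connected partitions of V(G), |π_i| is the size of the i-th block, C(π) the induced subgraphs, and [q^1] Z_zero(K;q,v) is the coefficient of q in Σ_{A⊆E(K)} q^{k(A)} v^{|A|}. -/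

import Mathlib

open scoped Classical
open Finset

structure MGraph (V E : Type) where
  ends : E → Sym2 V

namespace MGraph

variable {V E S R : Type} [Fintype V] [Fintype E]

/-- Two vertices are joined by an edge of `A`. -/
def adjRel (G : MGraph V E) (A : Finset E) (u v : V) : Prop :=
  ∃ e ∈ A, G.ends e = s(u, v)

/-- The setoid on vertices whose classes are the connected components of the
spanning subgraph `(V, A)`. -/
def compSetoid (G : MGraph V E) (A : Finset E) : Setoid V :=
  ⟨Relation.EqvGen (G.adjRel A), Relation.EqvGen.is_equivalence _⟩

/-- The connected components of the spanning subgraph `(V, A)`. -/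
def Comp (G : MGraph V E) (A : Finset E) : Type := Quotient (G.compSetoid A)

noncomputable instance (G : MGraph V E) (A : Finset E) : Fintype (G.Comp A) :=
  @Quotient.fintype V _ (G.compSetoid A) (Classical.decRel _)

/-- `k(A)`: the number of connected components of the spanning subgraph `(V, A)`. -/
noncomputable def kA (G : MGraph V E) (A : Finset E) : ℕ := Nat.card (G.Comp A)

/-- `u` and `v` are connected in the spanning subgraph `(V, A)`. -/
def Connects (G : MGraph V E) (A : Finset E) (u v : V) : Prop :=
  Relation.EqvGen (G.adjRel A) u v

/-- The endpoints of `e` are connected in the spanning subgraph `(V, A)`. -/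
def EndsConnected (G : MGraph V E) (A : Finset E) (e : E) : Prop :=
  ∃ u v, G.ends e = s(u, v) ∧ G.Connects A u v

def IsLoop (G : MGraph V E) (e : E) : Prop := (G.ends e).IsDiag

/-- `(V, A)` is a forest (acyclic spanning subgraph): every edge of `A` is a bridge of it. -/
def IsForest (G : MGraph V E) (A : Finset E) : Prop :=
  ∀ e ∈ A, ¬ G.EndsConnected (A.erase e) e

/-- All vertices are pairwise connected using edges of `A`. -/
def ConnectsAll (G : MGraph V E) (A : Finset E) : Prop := ∀ u v, G.Connects A u v

/-- A maximal spanning forest: a forest restricting to a spanning tree of each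
connected component of `G`. -/
def IsSpanningTree (G : MGraph V E) (T : Finset E) : Prop :=
  G.IsForest T ∧ ∀ u v, G.Connects T u v ↔ G.Connects Finset.univ u v

/-- `e ∈ T` is internally active: `e` is minimal in the cut
`{f : (T - e) ∪ {f} ∈ 𝒯(G)}`. -/
def IntActive [LinearOrder E] (G : MGraph V E) (T : Finset E) (e : E) : Prop :=
  e ∈ T ∧ ∀ f, G.IsSpanningTree (insert f (T.erase e)) → e ≤ f

/-- The edge set of the unique cycle of `T ∪ {e}` (when it exists):
`e` together with those `f ∈ T` whose removal disconnects the ends of `e`. -/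
noncomputable def cycleEdges (G : MGraph V E) (T : Finset E) (e : E) : Finset E :=
  insert e (T.filter fun f => ¬ G.EndsConnected (T.erase f) e)

/-- `e ∉ T` is externally active: `T ∪ {e}` contains a cycle through `e` and
`e` is the minimal edge of that cycle. -/
def ExtActive [LinearOrder E] (G : MGraph V E) (T : Finset E) (e : E) : Prop :=
  e ∉ T ∧ G.EndsConnected T e ∧ ∀ f ∈ G.cycleEdges T e, e ≤ f

/-- The vertex set of the component `c` of `(V, A)`. -/
noncomputable def compVerts (G : MGraph V E) (A : Finset E) (c : G.Comp A) : Finset V :=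
  Finset.univ.filter fun v => (Quotient.mk (G.compSetoid A) v) = c

/-- The total vertex weight of the component `c` of `(V, A)`. -/
noncomputable def compWeight [AddCommMonoid S] (G : MGraph V E) (A : Finset E)
    (ω : V → S) (c : G.Comp A) : S :=
  ∑ v ∈ G.compVerts A c, ω v

/-- The V-polynomial, defined by its state sum. -/
noncomputable def Vpoly [AddCommMonoid S] [CommRing R] (G : MGraph V E)
    (ω : V → S) (γ : E → R) : MvPolynomial S R :=
  ∑ A : Finset E, (∏ c : G.Comp A, MvPolynomial.X (G.compWeight A ω c)) *
    MvPolynomial.C (∏ e ∈ A, γ e)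

/-- The multivariate Tutte polynomial `Z_T(G; q, γ)` as a polynomial in `q`. -/
noncomputable def ZT [CommRing R] (G : MGraph V E) (γ : E → R) : Polynomial R :=
  ∑ A : Finset E, Polynomial.X ^ (G.kA A) * Polynomial.C (∏ e ∈ A, γ e)

/-- Deletion of the edge `e`. -/
def del (G : MGraph V E) (e : E) : MGraph V {f : E // f ≠ e} := ⟨fun f => G.ends f.1⟩

/-- Contraction of the edge `e`: vertices are the components of `(V, {e})`. -/
noncomputable def contract (G : MGraph V E) (e : E) : MGraph (G.Comp {e}) {f : E // f ≠ e} :=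
  ⟨fun f => (G.ends f.1).map (Quotient.mk (G.compSetoid {e}))⟩

/-- The forest `T` with the edges of `B` contracted: vertices are the components
of `(V, B)` and edges are `T \ B`. -/
noncomputable def contractIn (G : MGraph V E) (T B : Finset E) :
    MGraph (G.Comp B) ↥(T \ B : Finset E) :=
  ⟨fun f => (G.ends f.1).map (Quotient.mk (G.compSetoid B))⟩

/-- The edges of `G` with both ends inside `P`. -/
noncomputable def edgesIn (G : MGraph V E) (P : Finset V) : Finset E :=
  Finset.univ.filter fun e => ∀ v ∈ G.ends e, v ∈ P

/-- The subgraph of `G` induced by the vertex set `P`. -/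
noncomputable def induce (G : MGraph V E) (P : Finset V) : MGraph ↥P ↥(G.edgesIn P) :=
  ⟨fun e => (G.ends e.1).pmap (fun v hv => (⟨v, hv⟩ : ↥P))
    (by have he := e.2; simp only [edgesIn, Finset.mem_filter] at he; exact he.2)⟩

/-- The block `B` induces a connected subgraph of `G`. -/
def BlockConnected (G : MGraph V E) (B : Finset V) : Prop :=
  ∀ u ∈ B, ∀ v ∈ B, Relation.EqvGen (G.adjRel (G.edgesIn B)) u v

/-- A connected partition of `V(G)`: every vertex lies in exactly one block,
blocks are nonempty, and each block induces a connected subgraph. -/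
def IsConnectedPartition (G : MGraph V E) (P : Finset (Finset V)) : Prop :=
  (∀ B ∈ P, B.Nonempty) ∧ (∀ v : V, ∃! B, B ∈ P ∧ v ∈ B) ∧ ∀ B ∈ P, G.BlockConnected B

/-- The partition `Π(A)` of `V(G)` into the components of `(V, A)`. -/
noncomputable def partitionOf (G : MGraph V E) (A : Finset E) : Finset (Finset V) :=
  Finset.univ.image fun c : G.Comp A => G.compVerts A c

/-- The internally inactive edges of the spanning tree `T`. -/
noncomputable def intInactives [LinearOrder E] (G : MGraph V E) (T : Finset E) : Finset E :=
  T.filter fun e => ¬ G.IntActive T e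

/-- The internally active edges of the spanning tree `T`. -/
noncomputable def intActives [LinearOrder E] (G : MGraph V E) (T : Finset E) : Finset E :=
  T.filter fun e => G.IntActive T e

/-- The externally active edges w.r.t. the spanning tree / forest `T`. -/
noncomputable def extActives [LinearOrder E] (G : MGraph V E) (T : Finset E) : Finset E :=
  Finset.univ.filter fun e => G.ExtActive T e

/-- Kronecker delta `δ(σ_i, σ_j)` for the two ends of the edge `e`. -/
noncomputable def edgeDelta (G : MGraph V E) {q : ℕ} (σ : V → Fin q) (e : E) : ℂ :=
  Sym2.lift ⟨fun u v => if σ u = σ v then 1 else 0, fun u v => by simp [eq_comm]⟩ (G.ends e)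

/-- The Potts partition function with variable interactions `J` and
field vectors `M`. -/
noncomputable def Zext (G : MGraph V E) (q : ℕ) (β : ℂ) (J : E → ℂ) (M : V → Fin q → ℂ) : ℂ :=
  ∑ σ : V → Fin q, Complex.exp (β * ((∑ e : E, J e * G.edgeDelta σ e) +
    ∑ v : V, ∑ α : Fin q, M v α * (if α = σ v then 1 else 0)))

/-- The Potts partition function with constant interaction `J` and constant
field `H` favouring the first spin. -/
noncomputable def ZconstField (G : MGraph V E) (q : ℕ) (β J H : ℂ) : ℂ :=
  ∑ σ : V → Fin q, Complex.exp (β * (J * (∑ e : E, G.edgeDelta σ e) +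
    H * ∑ v : V, (if (σ v : ℕ) = 0 then (1 : ℂ) else 0)))

/-- The zero-field Potts partition function with constant interaction `J`. -/
noncomputable def Zzero (G : MGraph V E) (q : ℕ) (β J : ℂ) : ℂ :=
  ∑ σ : V → Fin q, Complex.exp (β * J * ∑ e : E, G.edgeDelta σ e)

end MGraph
set_option linter.unusedSectionVars false
set_option maxHeartbeats 1000000

namespace MGraph

variable {V E : Type} [Fintype V] [Fintype E] (G : MGraph V E)

lemma ends_exists (e : E) : ∃ u v, G.ends e = s(u, v) := by
  have h : ∀ s : Sym2 V, ∃ u v, s = s(u, v) := by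
    intro s
    induction s using Sym2.ind with
    | _ u v => exact ⟨u, v, rfl⟩
  exact h _

lemma edgeDelta_eq {q : ℕ} (σ : V → Fin q) {e : E} {u v : V} (h : G.ends e = s(u, v)) :
    G.edgeDelta σ e = if σ u = σ v then 1 else 0 := by
  rw [edgeDelta, h, Sym2.lift_mk]

lemma connects_mono {A A' : Finset E} (h : A ⊆ A') {u v : V} (hc : G.Connects A u v) :
    G.Connects A' u v := by
  refine Relation.EqvGen.mono ?_ _ _ hc
  rintro x y ⟨e, he, hx⟩
  exact ⟨e, h he, hx⟩

lemma mem_compVerts {A : Finset E} {v : V} {c : G.Comp A} :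
    v ∈ G.compVerts A c ↔ Quotient.mk (G.compSetoid A) v = c := by
  simp [compVerts]

lemma connects_of_mk_eq {A : Finset E} {u v : V}
    (h : Quotient.mk (G.compSetoid A) u = Quotient.mk (G.compSetoid A) v) :
    G.Connects A u v := Quotient.exact h

lemma mk_eq_of_connects {A : Finset E} {u v : V} (h : G.Connects A u v) :
    Quotient.mk (G.compSetoid A) u = Quotient.mk (G.compSetoid A) v := Quotient.sound h

/-- Product of edge deltas over `A`. -/
lemma prod_edgeDelta {q : ℕ} (A : Finset E) (σ : V → Fin q) :
    (∏ e ∈ A, G.edgeDelta σ e) =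
      if ∀ u v, G.Connects A u v → σ u = σ v then 1 else 0 := by
  split_ifs with h
  · refine Finset.prod_eq_one fun e he => ?_
    obtain ⟨u, v, huv⟩ := G.ends_exists e
    rw [G.edgeDelta_eq σ huv, if_pos]
    exact h u v (Relation.EqvGen.rel _ _ ⟨e, he, huv⟩)
  · push_neg at h
    obtain ⟨u, v, hc, hne⟩ := h
    by_contra hprod
    have hall : ∀ e ∈ A, G.edgeDelta σ e = 1 := by
      intro e he
      obtain ⟨x, y, hxy⟩ := G.ends_exists e
      rw [G.edgeDelta_eq σ hxy]
      split_ifs with hs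
      · rfl
      · exfalso; apply hprod
        refine Finset.prod_eq_zero he ?_
        rw [G.edgeDelta_eq σ hxy, if_neg hs]
    have key : ∀ x y, G.Connects A x y → σ x = σ y := by
      intro x y hc
      induction hc with
      | rel x y hr =>
        obtain ⟨e, he, hxy⟩ := hr
        have := hall e he
        rw [G.edgeDelta_eq σ hxy] at this
        by_contra hne'
        rw [if_neg hne'] at this
        exact one_ne_zero this.symm
      | refl => rfl
      | symm _ _ _ ih => exact ih.symm
      | trans _ _ _ _ _ ih1 ih2 => exact ih1.trans ih2
    exact hne (key u v hc)

/-- Spin sums against delta products factor through components. -/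
lemma sum_spin {q : ℕ} (A : Finset E) (F : (V → Fin q) → ℂ) :
    ∑ σ : V → Fin q, (∏ e ∈ A, G.edgeDelta σ e) * F σ =
      ∑ τ : G.Comp A → Fin q, F (fun v => τ (Quotient.mk (G.compSetoid A) v)) := by
  rw [← Finset.sum_filter_add_sum_filter_not Finset.univ
    (fun σ => ∀ u v, G.Connects A u v → σ u = σ v)]
  have h2 : ∑ σ ∈ Finset.univ.filter
      (fun σ : V → Fin q => ¬ ∀ u v, G.Connects A u v → σ u = σ v),
      (∏ e ∈ A, G.edgeDelta σ e) * F σ = 0 := by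
    refine Finset.sum_eq_zero fun σ hσ => ?_
    rw [Finset.mem_filter] at hσ
    rw [G.prod_edgeDelta A σ, if_neg hσ.2, zero_mul]
  rw [h2, add_zero]
  refine Finset.sum_nbij' (fun σ => fun c : G.Comp A => σ c.out)
    (fun τ => fun v => τ (Quotient.mk (G.compSetoid A) v)) ?_ ?_ ?_ ?_ ?_
  · intro σ hσ; exact Finset.mem_univ _
  · intro τ hτ
    rw [Finset.mem_filter]
    refine ⟨Finset.mem_univ _, fun u v hc => ?_⟩
    exact congrArg τ (G.mk_eq_of_connects hc)
  · intro σ hσ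
    rw [Finset.mem_filter] at hσ
    funext v
    refine hσ.2 _ _ (G.connects_of_mk_eq ?_)
    exact Quotient.out_eq _
  · intro τ hτ
    funext c
    exact congrArg τ (Quotient.out_eq c)
  · intro σ hσ
    rw [Finset.mem_filter] at hσ
    rw [G.prod_edgeDelta A σ, if_pos hσ.2, one_mul]
    congr 1
    funext v
    refine hσ.2 _ _ (G.connects_of_mk_eq ?_)
    exact (Quotient.out_eq _).symm

end MGraph
namespace MGraph

variable {V E : Type} [Fintype V] [Fintype E] (G : MGraph V E)

lemma sum_fin_field {q : ℕ} (hq : 1 ≤ q) (a : ℂ) :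
    ∑ α : Fin q, (if (α : ℕ) = 0 then a else 1) = a + (q : ℂ) - 1 := by
  have h : ∀ α : Fin q, (if (α : ℕ) = 0 then a else (1:ℂ)) =
      (if α = ⟨0, hq⟩ then a - 1 else 0) + 1 := by
    intro α
    have h0 : (α : ℕ) = 0 ↔ α = ⟨0, hq⟩ := by
      rw [Fin.ext_iff]
    rw [if_congr h0 rfl rfl]
    split_ifs <;> ring
  rw [Finset.sum_congr rfl fun α _ => h α, Finset.sum_add_distrib,
    Finset.sum_ite_eq' Finset.univ (⟨0, hq⟩ : Fin q) (fun _ => a - 1),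
    if_pos (Finset.mem_univ _),
    Finset.sum_const, Finset.card_univ, Fintype.card_fin]
  ring

lemma field_sum {q : ℕ} (hq : 1 ≤ q) (β H : ℂ) (A : Finset E) :
    (∑ τ : G.Comp A → Fin q, Complex.exp (β * H *
      ∑ v : V, (if ((τ (Quotient.mk (G.compSetoid A) v) : ℕ) = 0) then (1:ℂ) else 0)))
    = ∏ c : G.Comp A, (Complex.exp (β * H * ((G.compVerts A c).card : ℂ)) + (q : ℂ) - 1) := by
  have hinner : ∀ τ : G.Comp A → Fin q,
      (∑ v : V, (if ((τ (Quotient.mk (G.compSetoid A) v) : ℕ) = 0) then (1:ℂ) else 0)) =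
      ∑ c : G.Comp A, ((G.compVerts A c).card : ℂ) * (if ((τ c : ℕ) = 0) then (1:ℂ) else 0) := by
    intro τ
    rw [← Finset.sum_fiberwise Finset.univ (fun v => Quotient.mk (G.compSetoid A) v)
      (fun v => (if ((τ (Quotient.mk (G.compSetoid A) v) : ℕ) = 0) then (1:ℂ) else 0))]
    refine Finset.sum_congr rfl fun c _ => ?_
    have : ∀ v ∈ Finset.univ.filter (fun v => Quotient.mk (G.compSetoid A) v = c),
        (if ((τ (Quotient.mk (G.compSetoid A) v) : ℕ) = 0) then (1:ℂ) else 0) =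
        (if ((τ c : ℕ) = 0) then (1:ℂ) else 0) := by
      intro v hv
      rw [Finset.mem_filter] at hv
      rw [hv.2]
    rw [Finset.sum_congr rfl this, Finset.sum_const, nsmul_eq_mul]
    simp only [compVerts]
    congr
  calc (∑ τ : G.Comp A → Fin q, Complex.exp (β * H *
        ∑ v : V, (if ((τ (Quotient.mk (G.compSetoid A) v) : ℕ) = 0) then (1:ℂ) else 0)))
      = ∑ τ : G.Comp A → Fin q, ∏ c : G.Comp A,
          (if ((τ c : ℕ) = 0) then Complex.exp (β * H * ((G.compVerts A c).card : ℂ)) else 1) := by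
        refine Finset.sum_congr rfl fun τ _ => ?_
        rw [hinner τ, Finset.mul_sum, Complex.exp_sum]
        refine Finset.prod_congr rfl fun c _ => ?_
        split_ifs with h
        · rw [mul_one]
        · rw [mul_zero, mul_zero, Complex.exp_zero]
    _ = ∏ c : G.Comp A, ∑ α : Fin q,
          (if ((α : ℕ) = 0) then Complex.exp (β * H * ((G.compVerts A c).card : ℂ)) else 1) := by
        rw [Finset.prod_univ_sum (fun _ => Finset.univ)
          (fun (c : G.Comp A) (α : Fin q) =>
            (if ((α : ℕ) = 0) then Complex.exp (β * H * ((G.compVerts A c).card : ℂ)) else 1)),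
          Fintype.piFinset_univ]
    _ = ∏ c : G.Comp A, (Complex.exp (β * H * ((G.compVerts A c).card : ℂ)) + (q : ℂ) - 1) := by
        refine Finset.prod_congr rfl fun c _ => ?_
        exact sum_fin_field hq _

lemma stepA {q : ℕ} (hq : 1 ≤ q) (β J H : ℂ) :
    G.ZconstField q β J H =
      ∑ A : Finset E,
        (∏ c : G.Comp A, (Complex.exp (β * H * ((G.compVerts A c).card : ℂ)) + (q : ℂ) - 1)) *
          (Complex.exp (β * J) - 1) ^ A.card := by
  have hdelta : ∀ (σ : V → Fin q) (e : E), G.edgeDelta σ e = 0 ∨ G.edgeDelta σ e = 1 := by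
    intro σ e
    obtain ⟨u, v, h⟩ := G.ends_exists e
    rw [G.edgeDelta_eq σ h]
    split_ifs <;> simp
  have hexp : ∀ (σ : V → Fin q) (e : E),
      Complex.exp (β * J * G.edgeDelta σ e) =
        (Complex.exp (β * J) - 1) * G.edgeDelta σ e + 1 := by
    intro σ e
    rcases hdelta σ e with h | h <;> rw [h] <;> simp
  unfold ZconstField
  have hsum : ∀ σ : V → Fin q,
      Complex.exp (β * (J * (∑ e : E, G.edgeDelta σ e) +
          H * ∑ v : V, (if (σ v : ℕ) = 0 then (1:ℂ) else 0))) =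
      ∑ A : Finset E, (∏ e ∈ A, G.edgeDelta σ e) *
        ((Complex.exp (β * J) - 1) ^ A.card *
          Complex.exp (β * H * ∑ v : V, (if (σ v : ℕ) = 0 then (1:ℂ) else 0))) := by
    intro σ
    rw [mul_add, Complex.exp_add, ← mul_assoc β J, ← mul_assoc β H]
    rw [Finset.mul_sum, Complex.exp_sum]
    rw [Finset.prod_congr rfl fun e _ => hexp σ e, Finset.prod_add, Finset.powerset_univ,
      Finset.sum_mul]
    refine Finset.sum_congr rfl fun A _ => ?_
    rw [Finset.prod_const, one_pow, mul_one, Finset.prod_mul_distrib, Finset.prod_const]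
    ring
  rw [Finset.sum_congr rfl fun σ _ => hsum σ, Finset.sum_comm]
  refine Finset.sum_congr rfl fun A _ => ?_
  rw [G.sum_spin A, ← Finset.mul_sum, mul_comm]
  congr 1
  exact G.field_sum hq β H A

end MGraph
namespace MGraph

variable {V E : Type} [Fintype V] [Fintype E] (G : MGraph V E)

lemma out_mem_compVerts {A : Finset E} (c : G.Comp A) : c.out ∈ G.compVerts A c := by
  rw [mem_compVerts]
  exact Quotient.out_eq c

lemma compVerts_injective (A : Finset E) : Function.Injective (G.compVerts A) := by
  intro c c' h
  have h1 := G.out_mem_compVerts c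
  rw [h, mem_compVerts] at h1
  rw [← h1]
  exact (Quotient.out_eq c).symm

/-- A connectivity path stays inside the edges of its own component. -/
lemma connects_inter_edgesIn {A : Finset E} {u v : V} (h : G.Connects A u v) :
    G.Connects (A ∩ G.edgesIn (G.compVerts A (Quotient.mk (G.compSetoid A) u))) u v := by
  suffices hgen : ∀ x y, G.Connects A x y → ∀ c : G.Comp A,
      Quotient.mk (G.compSetoid A) x = c → G.Connects (A ∩ G.edgesIn (G.compVerts A c)) x y by
    exact hgen u v h _ rfl
  intro x y hxy
  induction hxy with
  | rel x y hr =>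
    intro c hc
    obtain ⟨e, he, hxy⟩ := hr
    have hy : Quotient.mk (G.compSetoid A) y = c := by
      rw [← hc]
      exact (G.mk_eq_of_connects (Relation.EqvGen.rel _ _ ⟨e, he, hxy⟩)).symm
    have hmem : e ∈ G.edgesIn (G.compVerts A c) := by
      rw [edgesIn, Finset.mem_filter]
      refine ⟨Finset.mem_univ _, fun w hw => ?_⟩
      rw [hxy, Sym2.mem_iff] at hw
      rcases hw with rfl | rfl
      · rw [mem_compVerts]; exact hc
      · rw [mem_compVerts]; exact hy
    exact Relation.EqvGen.rel _ _ ⟨e, Finset.mem_inter.2 ⟨he, hmem⟩, hxy⟩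
  | refl x => exact fun c _ => Relation.EqvGen.refl x
  | symm x y hxy ih =>
    intro c hc
    have hx : Quotient.mk (G.compSetoid A) x = c := by
      rw [← hc]
      exact G.mk_eq_of_connects hxy
    exact Relation.EqvGen.symm _ _ (ih c hx)
  | trans x y z hxy hyz ih1 ih2 =>
    intro c hc
    have hy : Quotient.mk (G.compSetoid A) y = c := by
      rw [← hc]
      exact (G.mk_eq_of_connects hxy).symm
    exact Relation.EqvGen.trans _ _ _ (ih1 c hc) (ih2 c hy)

lemma mem_partitionOf {A : Finset E} {B : Finset V} :
    B ∈ G.partitionOf A ↔ ∃ c, G.compVerts A c = B := by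
  simp [partitionOf]

lemma isConnectedPartition_partitionOf (A : Finset E) :
    G.IsConnectedPartition (G.partitionOf A) := by
  refine ⟨?_, ?_, ?_⟩
  · intro B hB
    obtain ⟨c, rfl⟩ := (G.mem_partitionOf).1 hB
    exact ⟨c.out, G.out_mem_compVerts c⟩
  · intro v
    refine ⟨G.compVerts A (Quotient.mk (G.compSetoid A) v), ⟨?_, ?_⟩, ?_⟩
    · exact (G.mem_partitionOf).2 ⟨_, rfl⟩
    · exact (G.mem_compVerts).2 rfl
    · rintro B ⟨hB, hvB⟩
      obtain ⟨c, rfl⟩ := (G.mem_partitionOf).1 hB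
      rw [mem_compVerts] at hvB
      rw [hvB]
  · intro B hB
    obtain ⟨c, rfl⟩ := (G.mem_partitionOf).1 hB
    intro u hu v hv
    rw [mem_compVerts] at hu hv
    have hc : G.Connects A u v := G.connects_of_mk_eq (hu.trans hv.symm)
    have := G.connects_inter_edgesIn hc
    rw [hu] at this
    exact G.connects_mono Finset.inter_subset_right this

lemma block_unique {P : Finset (Finset V)} (hP : G.IsConnectedPartition P)
    {B B' : Finset V} (hB : B ∈ P) (hB' : B' ∈ P) {v : V} (hv : v ∈ B) (hv' : v ∈ B') :
    B = B' := by
  obtain ⟨C, hC, hCuniq⟩ := hP.2.1 v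
  rw [hCuniq B ⟨hB, hv⟩, hCuniq B' ⟨hB', hv'⟩]

lemma edgesIn_block_unique {P : Finset (Finset V)} (hP : G.IsConnectedPartition P)
    {B B' : Finset V} (hB : B ∈ P) (hB' : B' ∈ P) {e : E}
    (he : e ∈ G.edgesIn B) (he' : e ∈ G.edgesIn B') : B = B' := by
  obtain ⟨u, v, huv⟩ := G.ends_exists e
  rw [edgesIn, Finset.mem_filter] at he he'
  have hu : u ∈ G.ends e := by rw [huv]; exact Sym2.mem_mk_left u v
  exact G.block_unique hP hB hB' (he.2 u hu) (he'.2 u hu)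

lemma partitionOf_eq_iff {A : Finset E} {P : Finset (Finset V)}
    (hP : G.IsConnectedPartition P) :
    G.partitionOf A = P ↔
      (∀ e ∈ A, ∃ B ∈ P, e ∈ G.edgesIn B) ∧
      (∀ B ∈ P, ∀ u ∈ B, ∀ v ∈ B, G.Connects (A ∩ G.edgesIn B) u v) := by
  constructor
  · rintro rfl
    constructor
    · intro e he
      obtain ⟨u, v, huv⟩ := G.ends_exists e
      refine ⟨G.compVerts A (Quotient.mk (G.compSetoid A) u),
        (G.mem_partitionOf).2 ⟨_, rfl⟩, ?_⟩
      rw [edgesIn, Finset.mem_filter]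
      refine ⟨Finset.mem_univ _, fun w hw => ?_⟩
      rw [huv, Sym2.mem_iff] at hw
      rcases hw with rfl | rfl
      · exact (G.mem_compVerts).2 rfl
      · refine (G.mem_compVerts).2 ?_
        exact (G.mk_eq_of_connects (Relation.EqvGen.rel _ _ ⟨e, he, huv⟩)).symm
    · intro B hB u hu v hv
      obtain ⟨c, rfl⟩ := (G.mem_partitionOf).1 hB
      rw [mem_compVerts] at hu hv
      have hc : G.Connects A u v := G.connects_of_mk_eq (hu.trans hv.symm)
      have := G.connects_inter_edgesIn hc
      rw [hu] at this
      exact this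
  · rintro ⟨h1, h2⟩
    -- connectivity preserves blocks
    have hpres : ∀ x y, G.Connects A x y → ∀ B ∈ P, (x ∈ B ↔ y ∈ B) := by
      intro x y hxy
      induction hxy with
      | rel x y hr =>
        intro B hB
        obtain ⟨e, he, hxy⟩ := hr
        obtain ⟨B', hB', heB'⟩ := h1 e he
        rw [edgesIn, Finset.mem_filter] at heB'
        have hx' : x ∈ B' := heB'.2 x (by rw [hxy]; exact Sym2.mem_mk_left x y)
        have hy' : y ∈ B' := heB'.2 y (by rw [hxy]; exact Sym2.mem_mk_right x y)
        constructor
        · intro hx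
          rw [G.block_unique hP hB hB' hx hx']
          exact hy'
        · intro hy
          rw [G.block_unique hP hB hB' hy hy']
          exact hx'
      | refl x => exact fun B _ => Iff.rfl
      | symm x y _ ih => exact fun B hB => (ih B hB).symm
      | trans x y z _ _ ih1 ih2 => exact fun B hB => (ih1 B hB).trans (ih2 B hB)
    -- each component equals the block of any of its vertices
    have hcomp : ∀ (v : V) (B : Finset V), B ∈ P → v ∈ B →
        G.compVerts A (Quotient.mk (G.compSetoid A) v) = B := by
      intro v B hB hvB
      ext u
      refine (G.mem_compVerts).trans ?_
      constructor
      · intro hu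
        exact (hpres u v (G.connects_of_mk_eq hu) B hB).2 hvB
      · intro hu
        have := h2 B hB u hu v hvB
        exact G.mk_eq_of_connects (G.connects_mono Finset.inter_subset_left this)
    ext B
    rw [mem_partitionOf]
    constructor
    · rintro ⟨c, rfl⟩
      obtain ⟨B', ⟨hB', hvB'⟩, _⟩ := hP.2.1 c.out
      have := hcomp c.out B' hB' hvB'
      erw [Quotient.out_eq] at this
      rw [this]
      exact hB'
    · intro hB
      obtain ⟨v, hv⟩ := hP.1 B hB
      exact ⟨Quotient.mk (G.compSetoid A) v, hcomp v B hB hv⟩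

lemma prod_comp_eq_prod_blocks {A : Finset E} (w : Finset V → ℂ) :
    ∏ c : G.Comp A, w (G.compVerts A c) = ∏ B ∈ G.partitionOf A, w B := by
  rw [partitionOf, Finset.prod_image]
  intro c _ c' _ h
  exact G.compVerts_injective A h

end MGraph
namespace MGraph

variable {V E : Type} [Fintype V] [Fintype E] (G : MGraph V E)

lemma mem_edgesIn {B : Finset V} {e : E} :
    e ∈ G.edgesIn B ↔ ∀ w ∈ G.ends e, w ∈ B := by
  simp [edgesIn]

lemma sym2_pmap_eq {B : Finset V} {s : Sym2 V} (h : ∀ a ∈ s, a ∈ B) {u v : V}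
    (hs : s = s(u, v)) (hu : u ∈ B) (hv : v ∈ B) :
    s.pmap (fun a ha => (⟨a, ha⟩ : ↥B)) h = s((⟨u, hu⟩ : ↥B), (⟨v, hv⟩ : ↥B)) := by
  subst hs
  rfl

lemma induce_ends {B : Finset V} (e : ↥(G.edgesIn B)) {u v : V}
    (h : G.ends e.1 = s(u, v)) (hu : u ∈ B) (hv : v ∈ B) :
    (G.induce B).ends e = s((⟨u, hu⟩ : ↥B), (⟨v, hv⟩ : ↥B)) :=
  sym2_pmap_eq _ h hu hv

lemma end_mem_left {B : Finset V} (e : ↥(G.edgesIn B)) {u v : V}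
    (h : G.ends e.1 = s(u, v)) : u ∈ B :=
  (G.mem_edgesIn.1 e.2) u (by rw [h]; exact Sym2.mem_mk_left u v)

lemma end_mem_right {B : Finset V} (e : ↥(G.edgesIn B)) {u v : V}
    (h : G.ends e.1 = s(u, v)) : v ∈ B :=
  (G.mem_edgesIn.1 e.2) v (by rw [h]; exact Sym2.mem_mk_right u v)

lemma induce_ends_val {B : Finset V} {e : ↥(G.edgesIn B)} {x y : ↥B}
    (h : (G.induce B).ends e = s(x, y)) : G.ends e.1 = s(x.1, y.1) := by
  obtain ⟨u, v, huv⟩ := G.ends_exists e.1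
  have hu : u ∈ B := G.end_mem_left e huv
  have hv : v ∈ B := G.end_mem_right e huv
  have h2 := (G.induce_ends e huv hu hv).symm.trans h
  rw [Sym2.eq_iff] at h2
  rcases h2 with ⟨h1, h2⟩ | ⟨h1, h2⟩
  · rw [huv, ← h1, ← h2]
  · rw [huv, ← h1, ← h2, Sym2.eq_swap]

lemma induce_connects_val {B : Finset V} {s : Finset ↥(G.edgesIn B)} {x y : ↥B}
    (h : (G.induce B).Connects s x y) :
    G.Connects (s.image Subtype.val) x.1 y.1 := by
  induction h with
  | rel x y hr =>
    obtain ⟨e, he, hends⟩ := hr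
    exact Relation.EqvGen.rel _ _
      ⟨e.1, Finset.mem_image_of_mem _ he, G.induce_ends_val hends⟩
  | refl x => exact Relation.EqvGen.refl _
  | symm _ _ _ ih => exact Relation.EqvGen.symm _ _ ih
  | trans _ _ _ _ _ ih1 ih2 => exact Relation.EqvGen.trans _ _ _ ih1 ih2

lemma connects_lift {B : Finset V} {s : Finset ↥(G.edgesIn B)} {u v : V}
    (h : G.Connects (s.image Subtype.val) u v) :
    u = v ∨ ∃ (hu : u ∈ B) (hv : v ∈ B), (G.induce B).Connects s ⟨u, hu⟩ ⟨v, hv⟩ := by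
  induction h with
  | rel x y hr =>
    obtain ⟨e', he', hends⟩ := hr
    obtain ⟨e, hes, rfl⟩ := Finset.mem_image.1 he'
    have hx : x ∈ B := G.end_mem_left e hends
    have hy : y ∈ B := G.end_mem_right e hends
    exact Or.inr ⟨hx, hy, Relation.EqvGen.rel _ _ ⟨e, hes, G.induce_ends e hends hx hy⟩⟩
  | refl x => exact Or.inl rfl
  | symm x y _ ih =>
    rcases ih with rfl | ⟨hx, hy, hc⟩
    · exact Or.inl rfl
    · exact Or.inr ⟨hy, hx, Relation.EqvGen.symm _ _ hc⟩
  | trans x y z _ _ ih1 ih2 =>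
    rcases ih1 with rfl | ⟨hx, hy, hc1⟩
    · exact ih2
    · rcases ih2 with rfl | ⟨hy', hz, hc2⟩
      · exact Or.inr ⟨hx, hy, hc1⟩
      · exact Or.inr ⟨hx, hz, Relation.EqvGen.trans _ _ _ hc1 hc2⟩

lemma kA_eq_one_iff (B : Finset V) (s : Finset ↥(G.edgesIn B)) :
    (G.induce B).kA s = 1 ↔
      B.Nonempty ∧ ∀ u ∈ B, ∀ v ∈ B, G.Connects (s.image Subtype.val) u v := by
  rw [kA, Nat.card_eq_one_iff_unique]
  constructor
  · rintro ⟨hsub, hne⟩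
    obtain ⟨c⟩ := hne
    refine ⟨⟨c.out.1, c.out.2⟩, fun u hu v hv => ?_⟩
    have h : (Quotient.mk ((G.induce B).compSetoid s) ⟨u, hu⟩) =
        (Quotient.mk ((G.induce B).compSetoid s) ⟨v, hv⟩) :=
      @Subsingleton.elim ((G.induce B).Comp s) hsub _ _
    exact G.induce_connects_val (Quotient.exact h)
  · rintro ⟨⟨v0, hv0⟩, hconn⟩
    constructor
    · constructor
      intro c c'
      rw [← Quotient.out_eq c, ← Quotient.out_eq c']
      rcases G.connects_lift (hconn c.out.1 c.out.2 c'.out.1 c'.out.2) with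
        heq | ⟨hu, hv, hc⟩
      · rw [Subtype.ext heq]
      · have : (G.induce B).Connects s c.out c'.out := hc
        exact Quotient.sound this
    · exact ⟨Quotient.mk ((G.induce B).compSetoid s) ⟨v0, hv0⟩⟩

end MGraph
namespace MGraph

variable {V E : Type} [Fintype V] [Fintype E] (G : MGraph V E)

/-- The edges of `A` inside the block `B`, as edges of the induced subgraph. -/
noncomputable def bE (A : Finset E) (B : Finset V) : Finset ↥(G.edgesIn B) :=
  Finset.univ.filter (fun e => e.1 ∈ A)

lemma mem_bE {A : Finset E} {B : Finset V} {e : ↥(G.edgesIn B)} :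
    e ∈ G.bE A B ↔ e.1 ∈ A := by simp [bE]

lemma image_bE (A : Finset E) (B : Finset V) :
    (G.bE A B).image Subtype.val = A ∩ G.edgesIn B := by
  ext e
  rw [Finset.mem_image, Finset.mem_inter]
  constructor
  · rintro ⟨e', he', rfl⟩
    exact ⟨G.mem_bE.1 he', e'.2⟩
  · rintro ⟨hA, hB⟩
    exact ⟨⟨e, hB⟩, G.mem_bE.2 hA, rfl⟩

lemma card_bE (A : Finset E) (B : Finset V) :
    (G.bE A B).card = (A ∩ G.edgesIn B).card := by
  rw [← G.image_bE, Finset.card_image_of_injective _ Subtype.val_injective]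

/-- Glue a family of block edge sets into a global edge set. -/
noncomputable def glueP (P : Finset (Finset V))
    (p : ∀ B ∈ P, Finset ↥(G.edgesIn B)) : Finset E :=
  Finset.univ.filter fun e =>
    ∃ B, ∃ hB : B ∈ P, ∃ he : e ∈ G.edgesIn B, (⟨e, he⟩ : ↥(G.edgesIn B)) ∈ p B hB

lemma mem_glueP {P : Finset (Finset V)} {p : ∀ B ∈ P, Finset ↥(G.edgesIn B)} {e : E} :
    e ∈ G.glueP P p ↔
      ∃ B, ∃ hB : B ∈ P, ∃ he : e ∈ G.edgesIn B, (⟨e, he⟩ : ↥(G.edgesIn B)) ∈ p B hB := by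
  simp [glueP]

lemma coeff_ZT_one (B : Finset V) (x : ℂ) :
    ((G.induce B).ZT (fun _ => x)).coeff 1 =
      ∑ s ∈ Finset.univ.filter
        (fun s : Finset ↥(G.edgesIn B) => (G.induce B).kA s = 1), x ^ s.card := by
  rw [ZT, Polynomial.finset_sum_coeff, Finset.sum_filter]
  refine Finset.sum_congr rfl fun s _ => ?_
  rw [Polynomial.coeff_mul_C, Polynomial.coeff_X_pow, Finset.prod_const]
  by_cases h : (G.induce B).kA s = 1
  · rw [if_pos h.symm, if_pos h, one_mul]
  · rw [if_neg (fun hh => h hh.symm), if_neg h, zero_mul]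

lemma fiber_sum {P : Finset (Finset V)} (hP : G.IsConnectedPartition P) (x : ℂ) :
    ∑ A ∈ Finset.univ.filter (fun A : Finset E => G.partitionOf A = P), x ^ A.card =
      ∏ B ∈ P, ∑ s ∈ Finset.univ.filter
        (fun s : Finset ↥(G.edgesIn B) => (G.induce B).kA s = 1), x ^ s.card := by
  rw [Finset.prod_sum]
  refine Finset.sum_nbij' (fun A => fun B hB => G.bE A B) (fun p => G.glueP P p)
    ?_ ?_ ?_ ?_ ?_
  · -- forward map lands in the pi set
    intro A hA
    rw [Finset.mem_filter] at hA
    rw [Finset.mem_pi]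
    intro B hB
    rw [Finset.mem_filter]
    refine ⟨Finset.mem_univ _, ?_⟩
    rw [G.kA_eq_one_iff]
    refine ⟨hP.1 B hB, ?_⟩
    rw [G.image_bE]
    exact ((G.partitionOf_eq_iff hP).1 hA.2).2 B hB
  · -- backward map lands in the fiber
    intro p hp
    rw [Finset.mem_pi] at hp
    have hclaim : ∀ (B : Finset V) (hB : B ∈ P),
        (G.glueP P p) ∩ G.edgesIn B = (p B hB).image Subtype.val := by
      intro B hB
      ext e
      rw [Finset.mem_inter, Finset.mem_image, G.mem_glueP]
      constructor
      · rintro ⟨⟨B', hB', he', hmem⟩, heB⟩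
        have hBB : B' = B := G.edgesIn_block_unique hP hB' hB he' heB
        subst hBB
        exact ⟨⟨e, he'⟩, hmem, rfl⟩
      · rintro ⟨e', he', rfl⟩
        exact ⟨⟨B, hB, e'.2, by rwa [show (⟨e'.1, e'.2⟩ : ↥(G.edgesIn B)) = e' from rfl]⟩,
          e'.2⟩
    rw [Finset.mem_filter]
    refine ⟨Finset.mem_univ _, ?_⟩
    rw [G.partitionOf_eq_iff hP]
    constructor
    · intro e he
      obtain ⟨B, hB, heB, _⟩ := G.mem_glueP.1 he
      exact ⟨B, hB, heB⟩
    · intro B hB u hu v hv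
      have hk := (Finset.mem_filter.1 (hp B hB)).2
      rw [G.kA_eq_one_iff] at hk
      have := hk.2 u hu v hv
      rwa [← hclaim B hB] at this
  · -- left inverse
    intro A hA
    rw [Finset.mem_filter] at hA
    ext e
    rw [G.mem_glueP]
    constructor
    · rintro ⟨B, hB, he, hmem⟩
      exact G.mem_bE.1 hmem
    · intro he
      obtain ⟨B, hB, heB⟩ := ((G.partitionOf_eq_iff hP).1 hA.2).1 e he
      exact ⟨B, hB, heB, G.mem_bE.2 he⟩
  · -- right inverse
    intro p hp
    funext B hB
    ext e
    rw [G.mem_bE, G.mem_glueP]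
    constructor
    · rintro ⟨B', hB', he', hmem⟩
      have hBB : B' = B := G.edgesIn_block_unique hP hB' hB he' e.2
      subst hBB
      rwa [show (⟨e.1, he'⟩ : ↥(G.edgesIn B')) = e from Subtype.ext rfl] at hmem
    · intro hmem
      exact ⟨B, hB, e.2, by rwa [show (⟨e.1, e.2⟩ : ↥(G.edgesIn B)) = e from rfl]⟩
  · -- weights agree
    intro A hA
    rw [Finset.mem_filter] at hA
    rw [Finset.prod_pow_eq_pow_sum]
    congr 1
    rw [Finset.sum_attach P (fun B => (G.bE A B).card)]
    have hdisj : ∀ B ∈ P, ∀ B' ∈ P, B ≠ B' →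
        Disjoint (A ∩ G.edgesIn B) (A ∩ G.edgesIn B') := by
      intro B hB B' hB' hne
      rw [Finset.disjoint_left]
      intro e he he'
      rw [Finset.mem_inter] at he he'
      exact hne (G.edgesIn_block_unique hP hB hB' he.2 he'.2)
    have hcover : P.biUnion (fun B => A ∩ G.edgesIn B) = A := by
      ext e
      rw [Finset.mem_biUnion]
      constructor
      · rintro ⟨B, hB, he⟩
        exact (Finset.mem_inter.1 he).1
      · intro he
        obtain ⟨B, hB, heB⟩ := ((G.partitionOf_eq_iff hP).1 hA.2).1 e he
        exact ⟨B, hB, Finset.mem_inter.2 ⟨he, heB⟩⟩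
    calc A.card = (P.biUnion (fun B => A ∩ G.edgesIn B)).card := by rw [hcover]
      _ = ∑ B ∈ P, (A ∩ G.edgesIn B).card := Finset.card_biUnion hdisj
      _ = ∑ B ∈ P, (G.bE A B).card := by
          exact Finset.sum_congr rfl fun B _ => (G.card_bE A B).symm

end MGraph
/-- Connected-partition expansion of the Potts partition function
with constant coupling `J` and constant field `H` favouring the first spin:
`Z(G) = Σ_{π∈P(G)} (∏_i (e^{βH|π_i|}+q−1)) ∏_{K∈C(π)} [q^1] Z_zero(K;q,e^{βJ}−1)`. -/
theorem ZconstField_connected_partition_expansion {V E : Type} [Fintype V] [Fintype E]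
    (G : MGraph V E) (q : ℕ) (hq : 1 ≤ q) (β J H : ℂ) :
    G.ZconstField q β J H =
      ∑ P ∈ Finset.univ.filter (fun P => G.IsConnectedPartition P),
        (∏ B ∈ P, (Complex.exp (β * H * (B.card : ℂ)) + (q : ℂ) - 1)) *
        ∏ B ∈ P, ((G.induce B).ZT (fun _ => Complex.exp (β * J) - 1)).coeff 1 := by
  rw [G.stepA hq β J H]
  rw [← Finset.sum_fiberwise_of_maps_to
    (fun A (_ : A ∈ Finset.univ) => Finset.mem_filter.2
      ⟨Finset.mem_univ _, G.isConnectedPartition_partitionOf A⟩)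
    (fun A : Finset E =>
      (∏ c : G.Comp A, (Complex.exp (β * H * ((G.compVerts A c).card : ℂ)) + (q : ℂ) - 1)) *
        (Complex.exp (β * J) - 1) ^ A.card)]
  refine Finset.sum_congr rfl fun P hP => ?_
  rw [Finset.mem_filter] at hP
  have hPc := hP.2
  have hstep : ∀ A ∈ Finset.univ.filter (fun A : Finset E => G.partitionOf A = P),
      (∏ c : G.Comp A, (Complex.exp (β * H * ((G.compVerts A c).card : ℂ)) + (q : ℂ) - 1)) *
        (Complex.exp (β * J) - 1) ^ A.card =
      (∏ B ∈ P, (Complex.exp (β * H * (B.card : ℂ)) + (q : ℂ) - 1)) *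
        (Complex.exp (β * J) - 1) ^ A.card := by
    intro A hA
    rw [Finset.mem_filter] at hA
    congr 1
    calc ∏ c : G.Comp A, (Complex.exp (β * H * ((G.compVerts A c).card : ℂ)) + (q : ℂ) - 1)
        = ∏ B ∈ G.partitionOf A, (Complex.exp (β * H * (B.card : ℂ)) + (q : ℂ) - 1) :=
          G.prod_comp_eq_prod_blocks (fun B => Complex.exp (β * H * (B.card : ℂ)) + (q : ℂ) - 1)
      _ = ∏ B ∈ P, (Complex.exp (β * H * (B.card : ℂ)) + (q : ℂ) - 1) := by rw [hA.2]
  rw [Finset.sum_congr rfl hstep, ← Finset.mul_sum, G.fiber_sum hPc]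
  congr 1
  exact Finset.prod_congr rfl fun B _ => (G.coeff_ZT_one B _).symm
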